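/- Let A be a symmetric n×n integer matrix with even diagonal entries. Then there is an integer matrix P with det(P) = ±1 such that P^T A P modulo 4 is of the form diag(r·[[2,1],[1,2]], s·[[0,1],[1,0]], p·[2], Z), where Z is a symmetric matrix whose diagonal entries are all ≡ 0 mod 4 and whose every off-diagonal entry is ≡ 0 or 2 mod 4. -/

import Mathlib

/-- Entry `(i,j)` of the block diagonal matrix
`diag(r·[[2,1],[1,2]], s·[[0,1],[1,0]], t·[[0,2],[2,0]], p·[2], m·[0])`
(the `m` trailing zero rows/columns are implicit: the entry is `0` there). -/
def nfEntry (r s t p : ℕ) (i j : ℕ) : ℤ :=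
  if i < 2*r ∧ j < 2*r then (if i = j then 2 else if i / 2 = j / 2 then 1 else 0)
  else if 2*r ≤ i ∧ i < 2*r+2*s ∧ 2*r ≤ j ∧ j < 2*r+2*s then
    (if i ≠ j ∧ i / 2 = j / 2 then 1 else 0)
  else if 2*r+2*s ≤ i ∧ i < 2*r+2*s+2*t ∧ 2*r+2*s ≤ j ∧ j < 2*r+2*s+2*t then
    (if i ≠ j ∧ i / 2 = j / 2 then 2 else 0)
  else if 2*r+2*s+2*t ≤ i ∧ i < 2*r+2*s+2*t+p ∧ i = j then 2
  else 0

open Matrix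

def rho (r i : ℕ) : ℕ := if i < 2*r then i + 2 else if i < 2*r+2 then i - 2*r else i

section nfA
variable {r s p i j : ℕ}

lemma nfA1 (h1 : i < 2*r) (h2 : j < 2*r) :
    nfEntry r s 0 p i j = if i = j then 2 else if i/2 = j/2 then 1 else 0 := by
  unfold nfEntry; rw [if_pos ⟨h1,h2⟩]

lemma nfA2 (h1 : 2*r ≤ i) (h2 : i < 2*r+2*s) (h3 : 2*r ≤ j) (h4 : j < 2*r+2*s) :
    nfEntry r s 0 p i j = if i ≠ j ∧ i/2 = j/2 then 1 else 0 := by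
  unfold nfEntry; rw [if_neg (by omega), if_pos ⟨h1,h2,h3,h4⟩]

lemma nfA3 (h1 : 2*r+2*s ≤ i) (h2 : i < 2*r+2*s+p) :
    nfEntry r s 0 p i j = if i = j then 2 else 0 := by
  unfold nfEntry
  rw [if_neg (by omega), if_neg (by omega), if_neg (by omega)]
  split_ifs <;> omega

lemma nfA3' (h1 : 2*r+2*s ≤ j) (h2 : j < 2*r+2*s+p) :
    nfEntry r s 0 p i j = if i = j then 2 else 0 := by
  unfold nfEntry
  rw [if_neg (by omega), if_neg (by omega), if_neg (by omega)]
  split_ifs <;> omega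

lemma nfA4 (h1 : i < 2*r) (h2 : 2*r ≤ j) : nfEntry r s 0 p i j = 0 := by
  unfold nfEntry
  rw [if_neg (by omega), if_neg (by omega), if_neg (by omega), if_neg (by omega)]

lemma nfA4' (h1 : j < 2*r) (h2 : 2*r ≤ i) : nfEntry r s 0 p i j = 0 := by
  unfold nfEntry
  rw [if_neg (by omega), if_neg (by omega), if_neg (by omega), if_neg (by omega)]

lemma nfA5 (h1 : 2*r ≤ i) (h2 : i < 2*r+2*s) (h3 : ¬(2*r ≤ j ∧ j < 2*r+2*s)) :
    nfEntry r s 0 p i j = 0 := by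
  unfold nfEntry
  rw [if_neg (by omega), if_neg (by omega), if_neg (by omega), if_neg (by omega)]

lemma nfA5' (h1 : 2*r ≤ j) (h2 : j < 2*r+2*s) (h3 : ¬(2*r ≤ i ∧ i < 2*r+2*s)) :
    nfEntry r s 0 p i j = 0 := by
  unfold nfEntry
  rw [if_neg (by omega), if_neg (by omega), if_neg (by omega), if_neg (by omega)]

lemma nfA6 (h : 2*r+2*s+p ≤ i) : nfEntry r s 0 p i j = 0 := by
  unfold nfEntry
  rw [if_neg (by omega), if_neg (by omega), if_neg (by omega), if_neg (by omega)]

lemma nfA6' (h : 2*r+2*s+p ≤ j) : nfEntry r s 0 p i j = 0 := by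
  unfold nfEntry
  rw [if_neg (by omega), if_neg (by omega), if_neg (by omega), if_neg (by omega)]

lemma nf_shift2 (h1 : 2 ≤ i) (h2 : 2 ≤ j) :
    nfEntry (r+1) s 0 p i j = nfEntry r s 0 p (i-2) (j-2) := by
  unfold nfEntry
  exact if_congr (by omega)
    (if_congr (by omega) rfl (if_congr (by omega) rfl rfl))
    (if_congr (by omega) (if_congr (by omega) rfl rfl)
      (if_congr (by omega) (if_congr (by omega) rfl rfl)
        (if_congr (by omega) rfl rfl)))

lemma nf_shift2s (h1 : 2*r+2 ≤ i) (h2 : 2*r+2 ≤ j) :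
    nfEntry r (s+1) 0 p i j = nfEntry r s 0 p (i-2) (j-2) := by
  unfold nfEntry
  exact if_congr (by omega)
    (if_congr (by omega) rfl (if_congr (by omega) rfl rfl))
    (if_congr (by omega) (if_congr (by omega) rfl rfl)
      (if_congr (by omega) (if_congr (by omega) rfl rfl)
        (if_congr (by omega) rfl rfl)))

lemma nf_p_eval (q : ℕ) : nfEntry 0 0 0 q i j = if i < q ∧ i = j then 2 else 0 := by
  unfold nfEntry
  rw [if_neg (by omega), if_neg (by omega), if_neg (by omega)]
  split_ifs <;> omega

end nfA

lemma nf_r_succ (r s p i j : ℕ) : nfEntry (r+1) s 0 p i j =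
    (if i < 2 ∧ j < 2 then (if i = j then 2 else 1)
     else if 2 ≤ i ∧ 2 ≤ j then nfEntry r s 0 p (i-2) (j-2) else 0) := by
  by_cases h : i < 2 ∧ j < 2
  · rw [if_pos h, nfA1 (by omega) (by omega)]
    split_ifs <;> omega
  · rw [if_neg h]
    by_cases h2 : 2 ≤ i ∧ 2 ≤ j
    · rw [if_pos h2, nf_shift2 h2.1 h2.2]
    · rw [if_neg h2]
      have hm : (i < 2 ∧ 2 ≤ j) ∨ (j < 2 ∧ 2 ≤ i) := by omega
      rcases hm with ⟨hi, hj⟩ | ⟨hj, hi⟩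
      · rcases Nat.lt_or_ge j (2*(r+1)) with hj2 | hj2
        · rw [nfA1 (by omega) hj2, if_neg (by omega), if_neg (by omega)]
        · rw [nfA4 (by omega) hj2]
      · rcases Nat.lt_or_ge i (2*(r+1)) with hi2 | hi2
        · rw [nfA1 hi2 (by omega), if_neg (by omega), if_neg (by omega)]
        · rw [nfA4' (by omega) hi2]

lemma nf_p_succ (p i j : ℕ) : nfEntry 0 0 0 (p+1) i j =
    (if i = 0 ∧ j = 0 then 2
     else if 1 ≤ i ∧ 1 ≤ j then nfEntry 0 0 0 p (i-1) (j-1) else 0) := by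
  rw [nf_p_eval (p+1), nf_p_eval p]
  split_ifs <;> omega

lemma nf_s_succ (r s p i j : ℕ) : nfEntry r (s+1) 0 p i j =
    (if rho r i < 2 ∧ rho r j < 2 then (if rho r i = rho r j then 0 else 1)
     else if 2 ≤ rho r i ∧ 2 ≤ rho r j then
       nfEntry r s 0 p (rho r i - 2) (rho r j - 2) else 0) := by
  have case1 : ∀ k, k < 2*r → rho r k = k + 2 := fun k hk => by unfold rho; rw [if_pos hk]
  have case2 : ∀ k, 2*r ≤ k → k < 2*r+2 → rho r k = k - 2*r := fun k hk1 hk2 => by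
    unfold rho; rw [if_neg (by omega), if_pos hk2]
  have case3 : ∀ k, 2*r+2 ≤ k → rho r k = k := fun k hk => by
    unfold rho; rw [if_neg (by omega), if_neg (by omega)]
  rcases Nat.lt_or_ge i (2*r) with hi1 | hi1
  · rcases Nat.lt_or_ge j (2*r) with hj1 | hj1
    · rw [case1 i hi1, case1 j hj1, if_neg (by omega), if_pos (by omega)]
      simp only [Nat.add_sub_cancel]
      rw [nfA1 hi1 hj1, nfA1 hi1 hj1]
    · rcases Nat.lt_or_ge j (2*r+2) with hj2 | hj2
      · rw [case1 i hi1, case2 j hj1 hj2, if_neg (by omega), if_neg (by omega),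
          nfA4 hi1 (by omega)]
      · rw [case1 i hi1, case3 j hj2, if_neg (by omega), if_pos (by omega)]
        simp only [Nat.add_sub_cancel]
        rw [nfA4 hi1 (by omega), nfA4 hi1 (by omega)]
  · rcases Nat.lt_or_ge j (2*r) with hj1 | hj1
    · rcases Nat.lt_or_ge i (2*r+2) with hi2 | hi2
      · rw [case2 i hi1 hi2, case1 j hj1, if_neg (by omega), if_neg (by omega),
          nfA4' hj1 (by omega)]
      · rw [case3 i hi2, case1 j hj1, if_neg (by omega), if_pos (by omega)]
        simp only [Nat.add_sub_cancel]
        rw [nfA4' hj1 (by omega), nfA4' hj1 (by omega)]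
    · rcases Nat.lt_or_ge i (2*r+2) with hi2 | hi2
      · rcases Nat.lt_or_ge j (2*r+2) with hj2 | hj2
        · rw [case2 i hi1 hi2, case2 j hj1 hj2, if_pos (by omega),
            nfA2 (by omega) (by omega) (by omega) (by omega)]
          split_ifs <;> omega
        · rw [case2 i hi1 hi2, case3 j hj2, if_neg (by omega), if_neg (by omega)]
          by_cases hj3 : j < 2*r+2*(s+1)
          · rw [nfA2 (by omega) (by omega) (by omega) hj3, if_neg (by omega)]
          · rw [nfA5 (by omega) (by omega) (by omega)]
      · rcases Nat.lt_or_ge j (2*r+2) with hj2 | hj2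
        · rw [case3 i hi2, case2 j hj1 hj2, if_neg (by omega), if_neg (by omega)]
          by_cases hi3 : i < 2*r+2*(s+1)
          · rw [nfA2 (by omega) hi3 (by omega) (by omega), if_neg (by omega)]
          · rw [nfA5' (by omega) (by omega) (by omega)]
        · rw [case3 i hi2, case3 j hj2, if_neg (by omega), if_pos (by omega),
            nf_shift2s hi2 hj2]

abbrev R4 := ZMod 4

def red {a b : Type*} (P : Matrix a b ℤ) : Matrix a b R4 := P.map (Int.cast)

lemma red_mul {a b c : Type*} [Fintype b] (P : Matrix a b ℤ) (Q : Matrix b c ℤ) :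
    red (P * Q) = red P * red Q := Matrix.map_mul (f := Int.castRingHom R4)

lemma red_one {a : Type*} [DecidableEq a] : red (1 : Matrix a a ℤ) = 1 :=
  Matrix.map_one _ (by simp) (by simp)

lemma red_transpose {a b : Type*} (P : Matrix a b ℤ) : red Pᵀ = (red P)ᵀ :=
  Matrix.transpose_map

lemma red_fromBlocks {a b c d : Type*} (A : Matrix a b ℤ) (B : Matrix a c ℤ)
    (C : Matrix d b ℤ) (D : Matrix d c ℤ) :
    red (fromBlocks A B C D) = fromBlocks (red A) (red B) (red C) (red D) :=
  Matrix.fromBlocks_map A B C D _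

lemma red_submatrix {a b c d : Type*} (P : Matrix a b ℤ) (e₁ : c → a) (e₂ : d → b) :
    red (P.submatrix e₁ e₂) = (red P).submatrix e₁ e₂ := rfl

/-- integer congruence mod 4 -/
def Cong {m : Type*} [Fintype m] [DecidableEq m] (B B' : Matrix m m R4) : Prop :=
  ∃ P : Matrix m m ℤ, (P.det = 1 ∨ P.det = -1) ∧ B' = (red P)ᵀ * B * red P

lemma cong_refl {m : Type*} [Fintype m] [DecidableEq m] (B : Matrix m m R4) : Cong B B :=
  ⟨1, Or.inl Matrix.det_one, by simp [red_one]⟩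

lemma cong_trans {m : Type*} [Fintype m] [DecidableEq m] {B C D : Matrix m m R4}
    (h1 : Cong B C) (h2 : Cong C D) : Cong B D := by
  obtain ⟨P, hP, rfl⟩ := h1
  obtain ⟨Q, hQ, rfl⟩ := h2
  refine ⟨P * Q, ?_, by simp [red_mul, transpose_mul, Matrix.mul_assoc]⟩
  rw [Matrix.det_mul]
  rcases hP with h | h <;> rcases hQ with h' | h' <;> simp [h, h']

lemma cong_perm {m : Type*} [Fintype m] [DecidableEq m] (B : Matrix m m R4) (τ : Equiv.Perm m) :
    Cong B (B.submatrix τ τ) := by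
  refine ⟨(τ⁻¹).permMatrix ℤ, ?_, ?_⟩
  · rw [Matrix.det_permutation]
    rcases Int.units_eq_one_or (Equiv.Perm.sign τ⁻¹) with h | h <;> [left; right] <;>
      rw [h] <;> simp
  · have hred : red ((τ⁻¹).permMatrix ℤ) = (τ⁻¹).permMatrix R4 := by
      ext i j
      unfold red Equiv.Perm.permMatrix PEquiv.toMatrix
      simp only [Matrix.map_apply, Matrix.of_apply]
      split_ifs <;> simp
    have h1 : ((τ⁻¹).permMatrix R4)ᵀ = τ.toPEquiv.toMatrix := by
      rw [← PEquiv.toMatrix_symm, ← Equiv.toPEquiv_symm]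
      rfl
    rw [hred, h1, Matrix.mul_assoc, PEquiv.mul_toMatrix_toPEquiv,
      PEquiv.toMatrix_toPEquiv_mul, Matrix.submatrix_submatrix]
    rfl

lemma cong_reindex {m l : Type*} [Fintype m] [DecidableEq m] [Fintype l] [DecidableEq l]
    (e : m ≃ l) {B C : Matrix m m R4} (h : Cong B C) :
    Cong (reindex e e B) (reindex e e C) := by
  obtain ⟨P, hP, rfl⟩ := h
  refine ⟨reindex e e P, by rwa [Matrix.det_reindex_self], ?_⟩
  show _ = _
  rw [show red (reindex e e P) = reindex e e (red P) from rfl]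
  simp only [reindex_apply, transpose_submatrix, Matrix.submatrix_mul_equiv,
    Matrix.mul_assoc]

lemma red_zero {a b : Type*} : red (0 : Matrix a b ℤ) = 0 := Matrix.map_zero _ (by simp)

def lift4 {a b : Type*} (A : Matrix a b R4) : Matrix a b ℤ := A.map (fun x => (x.val : ℤ))
lemma red_lift {a b : Type*} (A : Matrix a b R4) : red (lift4 A) = A := by
  ext i j
  simp only [red, lift4, Matrix.map_apply]
  push_cast
  simp [ZMod.natCast_val, ZMod.cast_id']

def R2 : Matrix (Fin 2) (Fin 2) R4 := !![2,1;1,2]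
def S2 : Matrix (Fin 2) (Fin 2) R4 := !![0,1;1,0]
def T1 : Matrix (Fin 1) (Fin 1) R4 := !![2]

def e2 (n : ℕ) : Fin 2 ⊕ Fin n ≃ Fin (n+2) := finSumFinEquiv.trans (finCongr (by omega))
def e1 (n : ℕ) : Fin 1 ⊕ Fin n ≃ Fin (n+1) := finSumFinEquiv.trans (finCongr (by omega))

lemma e2_inl (n : ℕ) (k : Fin 2) : ((e2 n) (Sum.inl k) : ℕ) = k := by simp [e2]
lemma e2_inr (n : ℕ) (k : Fin n) : ((e2 n) (Sum.inr k) : ℕ) = (k : ℕ) + 2 := by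
  simp [e2]
lemma e1_inl (n : ℕ) (k : Fin 1) : ((e1 n) (Sum.inl k) : ℕ) = k := by simp [e1]
lemma e1_inr (n : ℕ) (k : Fin n) : ((e1 n) (Sum.inr k) : ℕ) = (k : ℕ) + 1 := by
  simp [e1]

lemma e2_symm_cases (n : ℕ) (i : Fin (n+2)) :
    (∃ k : Fin 2, (e2 n).symm i = Sum.inl k ∧ (i:ℕ) = (k:ℕ)) ∨
    (∃ k : Fin n, (e2 n).symm i = Sum.inr k ∧ (i:ℕ) = (k:ℕ) + 2) := by
  rcases h : (e2 n).symm i with k | k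
  · have hi : i = e2 n (Sum.inl k) := by rw [← h, Equiv.apply_symm_apply]
    exact Or.inl ⟨k, rfl, by rw [hi, e2_inl]⟩
  · have hi : i = e2 n (Sum.inr k) := by rw [← h, Equiv.apply_symm_apply]
    exact Or.inr ⟨k, rfl, by rw [hi, e2_inr]⟩

lemma e1_symm_cases (n : ℕ) (i : Fin (n+1)) :
    ((e1 n).symm i = Sum.inl 0 ∧ (i:ℕ) = 0) ∨
    (∃ k : Fin n, (e1 n).symm i = Sum.inr k ∧ (i:ℕ) = (k:ℕ) + 1) := by
  rcases h : (e1 n).symm i with k | k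
  · have hi : i = e1 n (Sum.inl k) := by rw [← h, Equiv.apply_symm_apply]
    have hk : k = 0 := Subsingleton.elim _ _
    exact Or.inl ⟨by rw [← hk], by rw [hi, e1_inl, hk]; rfl⟩
  · have hi : i = e1 n (Sum.inr k) := by rw [← h, Equiv.apply_symm_apply]
    exact Or.inr ⟨k, rfl, by rw [hi, e1_inr]⟩

lemma reindex_submatrix_self {m l : Type*} (e : m ≃ l) (M : Matrix l l R4) :
    reindex e e (M.submatrix e e) = M := by
  ext i j; simp

def NF (n r s p : ℕ) (C : Matrix (Fin n) (Fin n) R4) : Prop :=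
  2*r+2*s+p ≤ n ∧
  (∀ i j : Fin n, (i:ℕ) < 2*r+2*s+p → (j:ℕ) < 2*r+2*s+p →
    C i j = ((nfEntry r s 0 p (i:ℕ) (j:ℕ) : ℤ) : R4)) ∧
  (∀ i j : Fin n, (i:ℕ) < 2*r+2*s+p → 2*r+2*s+p ≤ (j:ℕ) → C i j = 0 ∧ C j i = 0) ∧
  (∀ i : Fin n, 2*r+2*s+p ≤ (i:ℕ) → C i i = 0) ∧
  (∀ i j : Fin n, 2*r+2*s+p ≤ (i:ℕ) → 2*r+2*s+p ≤ (j:ℕ) → i ≠ j →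
    C i j = 0 ∨ C i j = 2)

def Good (n : ℕ) (B : Matrix (Fin n) (Fin n) R4) : Prop :=
  ∃ C, Cong B C ∧ ∃ r s p : ℕ, NF n r s p C

lemma good_of_cong {n : ℕ} {B B' : Matrix (Fin n) (Fin n) R4} (h : Cong B B')
    (hg : Good n B') : Good n B := by
  obtain ⟨C, hc, hnf⟩ := hg; exact ⟨C, cong_trans h hc, hnf⟩

lemma cong_blockext {a b : Type*} [Fintype a] [DecidableEq a] [Fintype b] [DecidableEq b]
    (M : Matrix a a R4) {C D : Matrix b b R4} (h : Cong C D) :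
    Cong (fromBlocks M 0 0 C) (fromBlocks M 0 0 D) := by
  obtain ⟨P, hP, rfl⟩ := h
  refine ⟨fromBlocks 1 0 0 P, ?_, ?_⟩
  · rw [Matrix.det_fromBlocks_zero₂₁, Matrix.det_one, one_mul]; exact hP
  · rw [red_fromBlocks, red_one, red_zero, red_zero, fromBlocks_transpose,
      fromBlocks_multiply, fromBlocks_multiply]
    simp

lemma cong_corner {b : Type*} [Fintype b] [DecidableEq b]
    (M : Matrix (Fin 2) (Fin 2) R4) (E : Matrix (Fin 2) b R4) (F : Matrix b (Fin 2) R4)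
    (C : Matrix b b R4) (U : Matrix (Fin 2) (Fin 2) ℤ) (hU : U.det = 1 ∨ U.det = -1) :
    Cong (fromBlocks M E F C)
      (fromBlocks ((red U)ᵀ * M * red U) ((red U)ᵀ * E) (F * red U) C) := by
  refine ⟨fromBlocks U 0 0 1, ?_, ?_⟩
  · rw [Matrix.det_fromBlocks_zero₂₁, Matrix.det_one, mul_one]; exact hU
  · rw [red_fromBlocks, red_one, red_zero, red_zero, fromBlocks_transpose,
      fromBlocks_multiply, fromBlocks_multiply]
    simp [Matrix.mul_assoc]

lemma cong_clear {a b : Type*} [Fintype a] [DecidableEq a] [Fintype b] [DecidableEq b]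
    (M : Matrix a a R4) (E : Matrix a b R4) (C : Matrix b b R4) (X : Matrix a b R4)
    (hM : Mᵀ = M) (hX : M * X + E = 0) :
    Cong (fromBlocks M E Eᵀ C) (fromBlocks M 0 0 (Xᵀ * E + C)) := by
  have hzero : Xᵀ * M + Eᵀ = 0 := by
    have : (M * X + E)ᵀ = 0 := by rw [hX]; exact Matrix.transpose_zero
    rw [Matrix.transpose_add, Matrix.transpose_mul, hM] at this
    exact this
  refine ⟨fromBlocks 1 (lift4 X) 0 1, ?_, ?_⟩
  · rw [Matrix.det_fromBlocks_zero₂₁, Matrix.det_one, Matrix.det_one]; left; ring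
  · rw [red_fromBlocks, red_one, red_one, red_zero, red_lift, fromBlocks_transpose,
      fromBlocks_multiply, fromBlocks_multiply]
    simp only [Matrix.transpose_one, Matrix.transpose_zero, Matrix.one_mul,
      Matrix.mul_one, Matrix.zero_mul, Matrix.mul_zero, add_zero, zero_add]
    rw [hX, hzero, Matrix.zero_mul, zero_add]

lemma even_cases (x : R4) (h : 2 * x = 0) : x = 0 ∨ x = 2 := by revert h; revert x; decide
lemma odd_cases (x : R4) (h : ¬ 2 * x = 0) : x = 1 ∨ x = 3 := by revert h; revert x; decide

lemma ev_add {x y : R4} (hx : 2 * x = 0) (hy : 2 * y = 0) : 2 * (x + y) = 0 := by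
  rw [mul_add, hx, hy, add_zero]
lemma ev_neg {x : R4} (hx : 2 * x = 0) : 2 * (-x) = 0 := by
  rw [mul_neg, hx, neg_zero]

lemma ev_sum {ι : Type*} (s : Finset ι) (f : ι → R4) (h : ∀ i ∈ s, 2 * f i = 0) :
    2 * ∑ i ∈ s, f i = 0 := by
  rw [Finset.mul_sum]; exact Finset.sum_eq_zero h

lemma ev_mul_left {a b c : Type*} [Fintype b] (A : Matrix a b R4) (B : Matrix b c R4)
    (hA : ∀ i j, 2 * A i j = 0) (i : a) (j : c) : 2 * (A * B) i j = 0 := by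
  rw [Matrix.mul_apply]
  exact ev_sum _ _ (fun k _ => by rw [← mul_assoc, hA, zero_mul])

lemma ev_mul_right {a b c : Type*} [Fintype b] (A : Matrix a b R4) (B : Matrix b c R4)
    (hB : ∀ i j, 2 * B i j = 0) (i : a) (j : c) : 2 * (A * B) i j = 0 := by
  rw [Matrix.mul_apply]
  exact ev_sum _ _ (fun k _ => by rw [mul_left_comm, hB, mul_zero])

lemma quad_even (M : Matrix (Fin 2) (Fin 2) R4) (hM : M = R2 ∨ M = S2) (v : Fin 2 → R4) :
    2 * (∑ a, (∑ b, v b * M b a) * v a) = 0 := by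
  rcases hM with rfl | rfl <;> revert v <;> decide

lemma corner_fix (M : Matrix (Fin 2) (Fin 2) R4) (hs : Mᵀ = M)
    (h00 : 2 * M 0 0 = 0) (h11 : 2 * M 1 1 = 0) (hb : ¬ 2 * M 0 1 = 0) :
    ∃ U : Matrix (Fin 2) (Fin 2) ℤ, (U.det = 1 ∨ U.det = -1) ∧
      ((red U)ᵀ * M * red U = R2 ∨ (red U)ᵀ * M * red U = S2) := by
  have hM : M = !![M 0 0, M 0 1; M 1 0, M 1 1] := Matrix.eta_fin_two M
  have h10 : M 1 0 = M 0 1 := by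
    have := congrFun (congrFun hs 0) 1
    simpa using this
  rcases even_cases _ h00 with ha | ha <;> rcases odd_cases _ hb with hb' | hb' <;>
    rcases even_cases _ h11 with hd | hd
  · exact ⟨!![-1,0;0,-1], Or.inl (by norm_num [Matrix.det_fin_two_of]),
      Or.inr (by rw [hM, h10, ha, hb', hd]; decide)⟩
  · exact ⟨!![-1,-1;-1,0], Or.inr (by norm_num [Matrix.det_fin_two_of]),
      Or.inr (by rw [hM, h10, ha, hb', hd]; decide)⟩
  · exact ⟨!![-1,0;0,1], Or.inr (by norm_num [Matrix.det_fin_two_of]),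
      Or.inr (by rw [hM, h10, ha, hb', hd]; decide)⟩
  · exact ⟨!![-1,-1;0,1], Or.inr (by norm_num [Matrix.det_fin_two_of]),
      Or.inr (by rw [hM, h10, ha, hb', hd]; decide)⟩
  · exact ⟨!![-1,0;-1,-1], Or.inl (by norm_num [Matrix.det_fin_two_of]),
      Or.inr (by rw [hM, h10, ha, hb', hd]; decide)⟩
  · exact ⟨!![-1,-1;0,1], Or.inr (by norm_num [Matrix.det_fin_two_of]),
      Or.inl (by rw [hM, h10, ha, hb', hd]; decide)⟩
  · exact ⟨!![-1,0;-1,1], Or.inr (by norm_num [Matrix.det_fin_two_of]),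
      Or.inr (by rw [hM, h10, ha, hb', hd]; decide)⟩
  · exact ⟨!![-1,-1;-1,0], Or.inr (by norm_num [Matrix.det_fin_two_of]),
      Or.inl (by rw [hM, h10, ha, hb', hd]; decide)⟩

lemma NF_zero {n : ℕ} {B : Matrix (Fin n) (Fin n) R4}
    (hdiag : ∀ i, B i i = 0) (hoff : ∀ i j, i ≠ j → B i j = 0 ∨ B i j = 2) :
    NF n 0 0 0 B :=
  ⟨by omega, fun i j hi _ => absurd hi (by omega), fun i j hi _ => absurd hi (by omega),
   fun i _ => hdiag i, fun i j _ _ hij => hoff i j hij⟩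

lemma NF_extend_R2 {n r s p : ℕ} {D : Matrix (Fin n) (Fin n) R4} (h : NF n r s p D) :
    NF (n+2) (r+1) s p (reindex (e2 n) (e2 n) (fromBlocks R2 0 0 D)) := by
  obtain ⟨hle, h1, h2, h3, h4⟩ := h
  have hG : ∀ i j : Fin (n+2), (reindex (e2 n) (e2 n) (fromBlocks R2 0 0 D)) i j
      = fromBlocks R2 0 0 D ((e2 n).symm i) ((e2 n).symm j) := fun i j => rfl
  refine ⟨by omega, ?_, ?_, ?_, ?_⟩
  · intro i j hi hj
    rw [hG, nf_r_succ]
    rcases e2_symm_cases n i with ⟨a, ha, hia⟩ | ⟨a, ha, hia⟩ <;>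
      rcases e2_symm_cases n j with ⟨b, hb, hjb⟩ | ⟨b, hb, hjb⟩ <;> rw [ha, hb]
    · rw [Matrix.fromBlocks_apply₁₁, if_pos ⟨by omega, by omega⟩, hia, hjb]
      fin_cases a <;> fin_cases b <;> simp [R2]
    · rw [Matrix.fromBlocks_apply₁₂, if_neg (by omega), if_neg (by omega)]
      simp
    · rw [Matrix.fromBlocks_apply₂₁, if_neg (by omega), if_neg (by omega)]
      simp
    · rw [Matrix.fromBlocks_apply₂₂, if_neg (by omega), if_pos (by omega), hia, hjb]
      simp only [Nat.add_sub_cancel]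
      exact h1 a b (by omega) (by omega)
  · intro i j hi hj
    rcases e2_symm_cases n j with ⟨b, hb, hjb⟩ | ⟨b, hb, hjb⟩
    · exfalso; have := b.isLt; omega
    · have hbK : 2*r+2*s+p ≤ (b:ℕ) := by omega
      rcases e2_symm_cases n i with ⟨a, ha, hia⟩ | ⟨a, ha, hia⟩
      · constructor <;> rw [hG] <;> rw [ha, hb] <;> simp
      · have haK : (a:ℕ) < 2*r+2*s+p := by omega
        constructor <;> rw [hG] <;> rw [ha, hb] <;>
          simp only [Matrix.fromBlocks_apply₂₂]
        · exact (h2 a b haK hbK).1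
        · exact (h2 a b haK hbK).2
  · intro i hi
    rcases e2_symm_cases n i with ⟨a, ha, hia⟩ | ⟨a, ha, hia⟩
    · exfalso; have := a.isLt; omega
    · rw [hG, ha, Matrix.fromBlocks_apply₂₂]
      exact h3 a (by omega)
  · intro i j hi hj hij
    rcases e2_symm_cases n i with ⟨a, ha, hia⟩ | ⟨a, ha, hia⟩
    · exfalso; have := a.isLt; omega
    rcases e2_symm_cases n j with ⟨b, hb, hjb⟩ | ⟨b, hb, hjb⟩
    · exfalso; have := b.isLt; omega
    rw [hG, ha, hb, Matrix.fromBlocks_apply₂₂]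
    refine h4 a b (by omega) (by omega) ?_
    intro hab
    exact hij (Fin.ext (by omega))

lemma NF_extend_two {n p : ℕ} {D : Matrix (Fin n) (Fin n) R4} (h : NF n 0 0 p D) :
    NF (n+1) 0 0 (p+1) (reindex (e1 n) (e1 n) (fromBlocks T1 0 0 D)) := by
  obtain ⟨hle, h1, h2, h3, h4⟩ := h
  have hG : ∀ i j : Fin (n+1), (reindex (e1 n) (e1 n) (fromBlocks T1 0 0 D)) i j
      = fromBlocks T1 0 0 D ((e1 n).symm i) ((e1 n).symm j) := fun i j => rfl
  refine ⟨by omega, ?_, ?_, ?_, ?_⟩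
  · intro i j hi hj
    rw [hG, nf_p_succ]
    rcases e1_symm_cases n i with ⟨ha, hia⟩ | ⟨a, ha, hia⟩ <;>
      rcases e1_symm_cases n j with ⟨hb, hjb⟩ | ⟨b, hb, hjb⟩ <;> rw [ha, hb]
    · rw [Matrix.fromBlocks_apply₁₁, if_pos ⟨hia, hjb⟩]
      simp [T1]
    · rw [Matrix.fromBlocks_apply₁₂, if_neg (by omega), if_neg (by omega)]
      simp
    · rw [Matrix.fromBlocks_apply₂₁, if_neg (by omega), if_neg (by omega)]
      simp
    · rw [Matrix.fromBlocks_apply₂₂, if_neg (by omega), if_pos (by omega), hia, hjb]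
      simp only [Nat.add_sub_cancel]
      exact h1 a b (by omega) (by omega)
  · intro i j hi hj
    rcases e1_symm_cases n j with ⟨hb, hjb⟩ | ⟨b, hb, hjb⟩
    · exfalso; omega
    · have hbK : p ≤ (b:ℕ) := by omega
      rcases e1_symm_cases n i with ⟨ha, hia⟩ | ⟨a, ha, hia⟩
      · constructor <;> rw [hG] <;> rw [ha, hb] <;> simp
      · have haK : (a:ℕ) < p := by omega
        constructor <;> rw [hG] <;> rw [ha, hb] <;>
          simp only [Matrix.fromBlocks_apply₂₂]
        · exact (h2 a b (by omega) (by omega)).1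
        · exact (h2 a b (by omega) (by omega)).2
  · intro i hi
    rcases e1_symm_cases n i with ⟨ha, hia⟩ | ⟨a, ha, hia⟩
    · exfalso; omega
    · rw [hG, ha, Matrix.fromBlocks_apply₂₂]
      exact h3 a (by omega)
  · intro i j hi hj hij
    rcases e1_symm_cases n i with ⟨ha, hia⟩ | ⟨a, ha, hia⟩
    · exfalso; omega
    rcases e1_symm_cases n j with ⟨hb, hjb⟩ | ⟨b, hb, hjb⟩
    · exfalso; omega
    rw [hG, ha, hb, Matrix.fromBlocks_apply₂₂]
    refine h4 a b (by omega) (by omega) ?_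
    intro hab
    exact hij (Fin.ext (by omega))

def rhoinv (r i : ℕ) : ℕ := if i < 2 then i + 2*r else if i < 2*r+2 then i - 2 else i

lemma NF_extend_S2 {n r s p : ℕ} {D : Matrix (Fin n) (Fin n) R4} (h : NF n r s p D) :
    ∃ G, Cong (reindex (e2 n) (e2 n) (fromBlocks S2 0 0 D)) G ∧ NF (n+2) r (s+1) p G := by
  obtain ⟨hle, h1, h2, h3, h4⟩ := h
  have hB : ∀ i j : Fin (n+2), (reindex (e2 n) (e2 n) (fromBlocks S2 0 0 D)) i j
      = fromBlocks S2 0 0 D ((e2 n).symm i) ((e2 n).symm j) := fun i j => rfl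
  have hrn : 2*r ≤ n := by omega
  let σ : Equiv.Perm (Fin (n+2)) :=
    { toFun := fun i => ⟨rho r i, by have := i.isLt; unfold rho; split_ifs <;> omega⟩
      invFun := fun i => ⟨rhoinv r i, by have := i.isLt; unfold rhoinv; split_ifs <;> omega⟩
      left_inv := fun i => by
        apply Fin.ext
        show rhoinv r (rho r (i:ℕ)) = (i:ℕ)
        have := i.isLt; unfold rho rhoinv; split_ifs <;> omega
      right_inv := fun i => by
        apply Fin.ext
        show rho r (rhoinv r (i:ℕ)) = (i:ℕ)
        have := i.isLt; unfold rho rhoinv; split_ifs <;> omega }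
  have hσ : ∀ i : Fin (n+2), ((σ i : Fin (n+2)) : ℕ) = rho r (i:ℕ) := fun i => rfl
  refine ⟨_, cong_perm _ σ, ?_⟩
  have hG : ∀ i j : Fin (n+2),
      ((reindex (e2 n) (e2 n) (fromBlocks S2 0 0 D)).submatrix σ σ) i j
      = fromBlocks S2 0 0 D ((e2 n).symm (σ i)) ((e2 n).symm (σ j)) := fun i j => rfl
  have hrho_big : ∀ k : ℕ, 2*r+2 ≤ k → rho r k = k := fun k hk => by
    unfold rho; rw [if_neg (by omega), if_neg (by omega)]
  refine ⟨by omega, ?_, ?_, ?_, ?_⟩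
  · intro i j hi hj
    rw [hG, nf_s_succ]
    rcases e2_symm_cases n (σ i) with ⟨a, ha, hia⟩ | ⟨a, ha, hia⟩ <;>
      rcases e2_symm_cases n (σ j) with ⟨b, hb, hjb⟩ | ⟨b, hb, hjb⟩ <;>
        rw [ha, hb] <;> rw [hσ] at hia <;> rw [hσ] at hjb
    · rw [Matrix.fromBlocks_apply₁₁, if_pos ⟨by omega, by omega⟩, hia, hjb]
      fin_cases a <;> fin_cases b <;> simp [S2]
    · rw [Matrix.fromBlocks_apply₁₂, if_neg (by omega), if_neg (by omega)]
      simp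
    · rw [Matrix.fromBlocks_apply₂₁, if_neg (by omega), if_neg (by omega)]
      simp
    · rw [Matrix.fromBlocks_apply₂₂, if_neg (by omega), if_pos (by omega), hia, hjb]
      simp only [Nat.add_sub_cancel]
      have haK : (a:ℕ) < 2*r+2*s+p := by
        unfold rho at hia; split_ifs at hia <;> omega
      have hbK : (b:ℕ) < 2*r+2*s+p := by
        unfold rho at hjb; split_ifs at hjb <;> omega
      exact h1 a b haK hbK
  · intro i j hi hj
    have hrj : rho r (j:ℕ) = (j:ℕ) := hrho_big _ (by omega)
    rcases e2_symm_cases n (σ j) with ⟨b, hb, hjb⟩ | ⟨b, hb, hjb⟩ <;>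
      rw [hσ, hrj] at hjb
    · exfalso; have := b.isLt; omega
    have hbK : 2*r+2*s+p ≤ (b:ℕ) := by omega
    rcases e2_symm_cases n (σ i) with ⟨a, ha, hia⟩ | ⟨a, ha, hia⟩ <;> rw [hσ] at hia
    · constructor <;> rw [hG] <;> rw [ha, hb] <;> simp
    · have haK : (a:ℕ) < 2*r+2*s+p := by
        unfold rho at hia; split_ifs at hia <;> omega
      constructor <;> rw [hG] <;> rw [ha, hb] <;>
        simp only [Matrix.fromBlocks_apply₂₂]
      · exact (h2 a b haK hbK).1
      · exact (h2 a b haK hbK).2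
  · intro i hi
    have hri : rho r (i:ℕ) = (i:ℕ) := hrho_big _ (by omega)
    rcases e2_symm_cases n (σ i) with ⟨a, ha, hia⟩ | ⟨a, ha, hia⟩ <;>
      rw [hσ, hri] at hia
    · exfalso; have := a.isLt; omega
    · rw [hG, ha, Matrix.fromBlocks_apply₂₂]
      exact h3 a (by omega)
  · intro i j hi hj hij
    have hri : rho r (i:ℕ) = (i:ℕ) := hrho_big _ (by omega)
    have hrj : rho r (j:ℕ) = (j:ℕ) := hrho_big _ (by omega)
    rcases e2_symm_cases n (σ i) with ⟨a, ha, hia⟩ | ⟨a, ha, hia⟩ <;>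
      rw [hσ, hri] at hia
    · exfalso; have := a.isLt; omega
    rcases e2_symm_cases n (σ j) with ⟨b, hb, hjb⟩ | ⟨b, hb, hjb⟩ <;>
      rw [hσ, hrj] at hjb
    · exfalso; have := b.isLt; omega
    rw [hG, ha, hb, Matrix.fromBlocks_apply₂₂]
    refine h4 a b (by omega) (by omega) ?_
    intro hab
    exact hij (Fin.ext (by omega))

lemma blocks_decomp {a b : Type*} [Fintype a] [Fintype b] [DecidableEq a] [DecidableEq b]
    (G : Matrix (a ⊕ b) (a ⊕ b) R4) (hs : Gᵀ = G) :
    G = fromBlocks G.toBlocks₁₁ G.toBlocks₁₂ (G.toBlocks₁₂)ᵀ G.toBlocks₂₂ := by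
  have h21 : G.toBlocks₂₁ = (G.toBlocks₁₂)ᵀ := by
    ext i j
    show G (Sum.inr i) (Sum.inl j) = G (Sum.inl j) (Sum.inr i)
    conv_lhs => rw [← hs]
    exact Matrix.transpose_apply _ _ _
  rw [← h21, fromBlocks_toBlocks]

lemma exists_perm01 {N : ℕ} (i j : Fin (N+2)) (hij : i ≠ j) :
    ∃ τ : Equiv.Perm (Fin (N+2)), τ 0 = i ∧ τ 1 = j := by
  have hj' : (Equiv.swap (0 : Fin (N+2)) i) j ≠ 0 := by
    intro h
    have h2 := congrArg (Equiv.swap (0 : Fin (N+2)) i) h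
    rw [Equiv.swap_apply_self, Equiv.swap_apply_left] at h2
    exact hij h2.symm
  refine ⟨(Equiv.swap (1 : Fin (N+2)) ((Equiv.swap (0 : Fin (N+2)) i) j)).trans
    (Equiv.swap (0 : Fin (N+2)) i), ?_, ?_⟩
  · show (Equiv.swap (0 : Fin (N+2)) i) ((Equiv.swap 1 ((Equiv.swap (0:Fin (N+2)) i) j)) 0) = i
    rw [Equiv.swap_apply_of_ne_of_ne (by simp [Fin.ext_iff]) (Ne.symm hj'), Equiv.swap_apply_left]
  · show (Equiv.swap (0 : Fin (N+2)) i) ((Equiv.swap 1 ((Equiv.swap (0:Fin (N+2)) i) j)) 1) = j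
    rw [Equiv.swap_apply_left, Equiv.swap_apply_self]

lemma symm_entries {n : Type*} {B : Matrix n n R4} (hs : Bᵀ = B) (a b : n) :
    B a b = B b a := by
  conv_lhs => rw [← hs]
  exact Matrix.transpose_apply _ _ _

lemma good_even : ∀ n (B : Matrix (Fin n) (Fin n) R4), Bᵀ = B → (∀ i j, 2 * B i j = 0) →
    ∃ C, Cong B C ∧ ∃ p : ℕ, NF n 0 0 p C := by
  intro n
  induction n with
  | zero =>
    intro B _ _
    exact ⟨B, cong_refl B, 0, NF_zero (fun i => i.elim0) (fun i => i.elim0)⟩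
  | succ m IH =>
    intro B hs he
    by_cases hd : ∀ i, B i i = 0
    · exact ⟨B, cong_refl B, 0, NF_zero hd (fun i j _ => even_cases _ (he i j))⟩
    · push_neg at hd
      obtain ⟨i0, hi0⟩ := hd
      set τ := Equiv.swap (0 : Fin (m+1)) i0 with hτ
      set B₁ := B.submatrix τ τ with hB₁
      have hcong1 : Cong B B₁ := cong_perm B τ
      have hs1 : B₁ᵀ = B₁ := by
        ext i j; exact symm_entries hs _ _
      have he1 : ∀ i j, 2 * B₁ i j = 0 := fun i j => he _ _
      have h00 : B₁ 0 0 = 2 := by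
        show B (τ 0) (τ 0) = 2
        rw [hτ, Equiv.swap_apply_left]
        exact (even_cases _ (he i0 i0)).resolve_left hi0
      set Bs := B₁.submatrix (e1 m) (e1 m) with hBs
      have hsymBs : Bsᵀ = Bs := by ext i j; exact symm_entries hs1 _ _
      have heBs : ∀ i j, 2 * Bs i j = 0 := fun i j => he1 _ _
      set E := Bs.toBlocks₁₂ with hE
      set C := Bs.toBlocks₂₂ with hC
      have hdecomp : Bs = fromBlocks Bs.toBlocks₁₁ E Eᵀ C := blocks_decomp Bs hsymBs
      have hMT : Bs.toBlocks₁₁ = T1 := by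
        ext a b
        have ha : a = 0 := Subsingleton.elim _ _
        have hb : b = 0 := Subsingleton.elim _ _
        subst ha; subst hb
        show Bs (Sum.inl 0) (Sum.inl 0) = T1 0 0
        have h0 : e1 m (Sum.inl 0) = (0 : Fin (m+1)) := Fin.ext (e1_inl m 0)
        show B₁ (e1 m (Sum.inl 0)) (e1 m (Sum.inl 0)) = T1 0 0
        rw [h0, h00]; rfl
      rw [hMT] at hdecomp
      set X : Matrix (Fin 1) (Fin m) R4 := Matrix.of (fun a k => if E a k = 2 then 1 else 0)
        with hX
      have hXeq : T1 * X + E = 0 := by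
        ext a k
        have ha : a = 0 := Subsingleton.elim _ _
        subst ha
        have hTX : (T1 * X) 0 k = 2 * X 0 k := by
          rw [Matrix.mul_apply, Fin.sum_univ_one]; rfl
        have hEe : E 0 k = 0 ∨ E 0 k = 2 := even_cases _ (heBs _ _)
        rw [Matrix.add_apply, Matrix.zero_apply, hTX]
        simp only [hX, Matrix.of_apply]
        rcases hEe with h | h <;> rw [h] <;> decide
      have hT1s : T1ᵀ = T1 := by decide
      have hclear : Cong Bs (fromBlocks T1 0 0 (Xᵀ * E + C)) := by
        rw [hdecomp]; exact cong_clear T1 E C X hT1s hXeq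
      set C' := Xᵀ * E + C with hC'
      have hEneg : E = -(T1 * X) := eq_neg_of_add_eq_zero_right hXeq
      have hXE : Xᵀ * E = -(Xᵀ * T1 * X) := by
        rw [hEneg, Matrix.mul_neg, Matrix.mul_assoc]
      have hsymC' : C'ᵀ = C' := by
        rw [hC', Matrix.transpose_add, hXE]
        have : (Xᵀ * T1 * X)ᵀ = Xᵀ * T1 * X := by
          rw [Matrix.transpose_mul, Matrix.transpose_mul, Matrix.transpose_transpose,
            hT1s, Matrix.mul_assoc]
        rw [Matrix.transpose_neg, this]
        have hCs : Cᵀ = C := by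
          ext i j
          show Bs (Sum.inr j) (Sum.inr i) = Bs (Sum.inr i) (Sum.inr j)
          exact symm_entries hsymBs _ _
        rw [hCs]
      have heC' : ∀ i j, 2 * C' i j = 0 := by
        intro i j
        rw [hC', Matrix.add_apply]
        refine ev_add (ev_mul_right _ _ (fun a b => heBs _ _) i j) (heBs _ _)
      obtain ⟨C₂, hc2, p, hnf⟩ := IH C' hsymC' heC'
      have hchain : Cong B (reindex (e1 m) (e1 m) (fromBlocks T1 0 0 C₂)) := by
        have hB1eq : B₁ = reindex (e1 m) (e1 m) Bs := (reindex_submatrix_self (e1 m) B₁).symm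
        refine cong_trans hcong1 ?_
        rw [hB1eq]
        refine cong_trans (cong_reindex (e1 m) hclear) ?_
        exact cong_reindex (e1 m) (cong_blockext T1 hc2)
      exact ⟨_, hchain, p+1, NF_extend_two hnf⟩

lemma good_main (n : ℕ) : ∀ (B : Matrix (Fin n) (Fin n) R4), Bᵀ = B →
    (∀ i, 2 * B i i = 0) → Good n B := by
  induction n using Nat.strong_induction_on with
  | _ n IH =>
    intro B hs hd
    by_cases hall : ∀ i j, 2 * B i j = 0
    · obtain ⟨C, hc, p, hnf⟩ := good_even n B hs hall
      exact ⟨C, hc, 0, 0, p, hnf⟩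
    · push_neg at hall
      obtain ⟨i0, j0, hodd⟩ := hall
      have hij : i0 ≠ j0 := by
        intro h
        exact hodd (h ▸ hd i0)
      obtain ⟨m, rfl⟩ : ∃ m, n = m + 2 := by
        refine ⟨n - 2, ?_⟩
        have h1 := i0.isLt
        have h2 := j0.isLt
        by_contra hlt
        have hn1 : n ≤ 1 := by omega
        exact hij (Fin.ext (by omega))
      obtain ⟨τ, hτ0, hτ1⟩ := exists_perm01 i0 j0 hij
      set B₁ := B.submatrix τ τ with hB₁
      have hcong1 : Cong B B₁ := cong_perm B τ
      have hs1 : B₁ᵀ = B₁ := by ext i j; exact symm_entries hs _ _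
      have hd1 : ∀ i, 2 * B₁ i i = 0 := fun i => hd (τ i)
      have hodd1 : ¬ 2 * B₁ 0 1 = 0 := by
        show ¬ 2 * B (τ 0) (τ 1) = 0
        rw [hτ0, hτ1]; exact hodd
      set Bs := B₁.submatrix (e2 m) (e2 m) with hBs
      have hsymBs : Bsᵀ = Bs := by ext i j; exact symm_entries hs1 _ _
      set M := Bs.toBlocks₁₁ with hMdef
      set E := Bs.toBlocks₁₂ with hEdef
      set C := Bs.toBlocks₂₂ with hCdef
      have hdecomp : Bs = fromBlocks M E Eᵀ C := blocks_decomp Bs hsymBs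
      have h0 : e2 m (Sum.inl 0) = (0 : Fin (m+2)) := Fin.ext (e2_inl m 0)
      have h1 : e2 m (Sum.inl 1) = (1 : Fin (m+2)) := Fin.ext (e2_inl m 1)
      have hMs : Mᵀ = M := by
        ext a b
        show Bs (Sum.inl b) (Sum.inl a) = Bs (Sum.inl a) (Sum.inl b)
        exact symm_entries hsymBs _ _
      have hM00 : 2 * M 0 0 = 0 := by
        show 2 * B₁ (e2 m (Sum.inl 0)) (e2 m (Sum.inl 0)) = 0
        rw [h0]; exact hd1 0
      have hM11 : 2 * M 1 1 = 0 := by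
        show 2 * B₁ (e2 m (Sum.inl 1)) (e2 m (Sum.inl 1)) = 0
        rw [h1]; exact hd1 1
      have hM01 : ¬ 2 * M 0 1 = 0 := by
        show ¬ 2 * B₁ (e2 m (Sum.inl 0)) (e2 m (Sum.inl 1)) = 0
        rw [h0, h1]; exact hodd1
      obtain ⟨U, hU, hUM⟩ := corner_fix M hMs hM00 hM11 hM01
      set M' := (red U)ᵀ * M * red U with hM'def
      set E' := (red U)ᵀ * E with hE'def
      have hE'T : Eᵀ * red U = E'ᵀ := by
        rw [hE'def, Matrix.transpose_mul, Matrix.transpose_transpose]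
      have cong2 : Cong Bs (fromBlocks M' E' E'ᵀ C) := by
        rw [hdecomp]
        have hcc := cong_corner M E Eᵀ C U hU
        rw [hE'T] at hcc
        exact hcc
      have hM's : M'ᵀ = M' := by rcases hUM with h | h <;> rw [h] <;> decide
      have hMM : M' * M' = 1 := by rcases hUM with h | h <;> rw [h] <;> decide
      set X := -(M' * E') with hXdef
      have hXeq : M' * X + E' = 0 := by
        rw [hXdef, Matrix.mul_neg, ← Matrix.mul_assoc, hMM, Matrix.one_mul,
          neg_add_cancel]
      set C' := Xᵀ * E' + C with hC'def
      have cong3 : Cong (fromBlocks M' E' E'ᵀ C) (fromBlocks M' 0 0 C') :=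
        cong_clear M' E' C X hM's hXeq
      have hE'neg : E' = -(M' * X) := eq_neg_of_add_eq_zero_right hXeq
      have hXE : Xᵀ * E' = -(Xᵀ * M' * X) := by
        rw [hE'neg, Matrix.mul_neg, ← Matrix.mul_assoc]
      have hCs : Cᵀ = C := by
        ext i j
        show Bs (Sum.inr j) (Sum.inr i) = Bs (Sum.inr i) (Sum.inr j)
        exact symm_entries hsymBs _ _
      have hsymC' : C'ᵀ = C' := by
        rw [hC'def, Matrix.transpose_add, hXE]
        have hq : (Xᵀ * M' * X)ᵀ = Xᵀ * M' * X := by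
          rw [Matrix.transpose_mul, Matrix.transpose_mul, Matrix.transpose_transpose,
            hM's, ← Matrix.mul_assoc]
        rw [Matrix.transpose_neg, hq, hCs]
      have hdiagC' : ∀ k, 2 * C' k k = 0 := by
        intro k
        rw [hC'def, Matrix.add_apply]
        refine ev_add ?_ ?_
        · rw [hXE, Matrix.neg_apply]
          refine ev_neg ?_
          simp only [Matrix.mul_apply, Matrix.transpose_apply]
          exact quad_even M' hUM (fun t => X t k)
        · show 2 * B₁ (e2 m (Sum.inr k)) (e2 m (Sum.inr k)) = 0
          exact hd1 _
      obtain ⟨C₂, hc2, r, s, p, hnf⟩ := IH m (by omega) C' hsymC' hdiagC'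
      have hB1eq : B₁ = reindex (e2 m) (e2 m) Bs := (reindex_submatrix_self (e2 m) B₁).symm
      have hchain : Cong B (reindex (e2 m) (e2 m) (fromBlocks M' 0 0 C₂)) := by
        refine cong_trans hcong1 ?_
        rw [hB1eq]
        refine cong_trans (cong_reindex (e2 m) (cong_trans cong2 cong3)) ?_
        exact cong_reindex (e2 m) (cong_blockext M' hc2)
      rcases hUM with h | h
      · rw [h] at hchain
        exact ⟨_, hchain, r+1, s, p, NF_extend_R2 hnf⟩
      · rw [h] at hchain
        obtain ⟨G, hcg, hnfG⟩ := NF_extend_S2 hnf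
        exact ⟨G, cong_trans hchain hcg, r, s+1, p, hnfG⟩

open Matrix in
/-- Lemma 2.1: congruence mod 4 to diag(r·[[2,1],[1,2]], s·[[0,1],[1,0]], p·[2], Z)
where Z has diagonal ≡ 0 (mod 4) and off-diagonal entries ≡ 0 or 2 (mod 4). -/
theorem stmt_1 (n : ℕ) (A : Matrix (Fin n) (Fin n) ℤ)
    (hsym : A.IsSymm) (hdiag : ∀ i, Even (A i i)) :
    ∃ P : Matrix (Fin n) (Fin n) ℤ, (P.det = 1 ∨ P.det = -1) ∧
      ∃ r s p : ℕ, 2*r + 2*s + p ≤ n ∧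
        (∀ i j : Fin n, (i : ℕ) < 2*r + 2*s + p → (j : ℕ) < 2*r + 2*s + p →
          (((Pᵀ * A * P) i j : ℤ) : ZMod 4) = ((nfEntry r s 0 p (i : ℕ) (j : ℕ) : ℤ) : ZMod 4)) ∧
        (∀ i j : Fin n, (i : ℕ) < 2*r + 2*s + p → 2*r + 2*s + p ≤ (j : ℕ) →
          (((Pᵀ * A * P) i j : ℤ) : ZMod 4) = 0 ∧ (((Pᵀ * A * P) j i : ℤ) : ZMod 4) = 0) ∧
        (∀ i : Fin n, 2*r + 2*s + p ≤ (i : ℕ) →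
          (((Pᵀ * A * P) i i : ℤ) : ZMod 4) = 0) ∧
        (∀ i j : Fin n, 2*r + 2*s + p ≤ (i : ℕ) → 2*r + 2*s + p ≤ (j : ℕ) → i ≠ j →
          (((Pᵀ * A * P) i j : ℤ) : ZMod 4) = 0 ∨ (((Pᵀ * A * P) i j : ℤ) : ZMod 4) = 2) := by
  set B : Matrix (Fin n) (Fin n) R4 := red A with hB
  have hs : Bᵀ = B := by
    rw [hB, ← red_transpose, hsym.eq]
  have hd : ∀ i, 2 * B i i = 0 := by
    intro i
    obtain ⟨k, hk⟩ := hdiag i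
    show 2 * ((A i i : ℤ) : R4) = 0
    rw [hk]
    push_cast
    have h2 : ∀ x : R4, 2 * (x + x) = 0 := by decide
    exact h2 _
  obtain ⟨C, ⟨P, hP, hCeq⟩, r, s, p, hb, h1, h2, h3, h4⟩ := good_main n B hs hd
  have hent : ∀ i j, (((Pᵀ * A * P) i j : ℤ) : ZMod 4) = C i j := by
    intro i j
    rw [hCeq]
    show (red (Pᵀ * A * P)) i j = _
    rw [red_mul, red_mul, red_transpose]
  refine ⟨P, hP, r, s, p, hb, ?_, ?_, ?_, ?_⟩
  · intro i j hi hj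
    rw [hent i j]
    exact h1 i j hi hj
  · intro i j hi hj
    rw [hent i j, hent j i]
    exact h2 i j hi hj
  · intro i hi
    rw [hent i i]
    exact h3 i hi
  · intro i j hi hj hij
    rw [hent i j]
    exact h4 i j hi hj hij
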